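/- Let p be a prime, ε ∈ (ℤ/p)^* of order t, and g ∈ GL_d(ℤ) of finite order. Then the dimension of the ε-eigenspace of the reduction of g modulo p (as an endomorphism of (ℤ/p)^d) is at most d/φ(t). -/

import Mathlib

open Polynomial Module

/-! ### Auxiliary lemmas -/

theorem charpoly_diagonal_aux {K : Type*} [CommRing K] {ι : Type*} [Fintype ι] [DecidableEq ι]
    (v : ι → K) : (Matrix.diagonal v).charpoly = ∏ i, (X - C (v i)) := by
  rw [Matrix.charpoly]
  have : Matrix.charmatrix (Matrix.diagonal v) = Matrix.diagonal (fun i => X - C (v i)) := by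
    ext i j
    rcases eq_or_ne i j with rfl | hij
    · simp [Matrix.charmatrix_apply_eq]
    · simp [Matrix.charmatrix_apply_ne _ _ _ hij, Matrix.diagonal_apply_ne _ hij]
  rw [this, Matrix.det_diagonal]

theorem aux_basis_dvd {K V : Type*} [Field K] [AddCommGroup V] [Module K V] [FiniteDimensional K V]
    {ι₁ ι₂ : Type*} [Fintype ι₁] [Fintype ι₂] [DecidableEq ι₁] [DecidableEq ι₂]
    (b : Basis (ι₁ ⊕ ι₂) K V) (f : Module.End K V) (μ : K)
    (h : ∀ j, f (b (Sum.inl j)) = μ • b (Sum.inl j)) :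
    (X - C μ) ^ (Fintype.card ι₁) ∣ f.charpoly := by
  have hM : f.charpoly = (LinearMap.toMatrix b b f).charpoly :=
    (LinearMap.charpoly_toMatrix f b).symm
  set M := LinearMap.toMatrix b b f with hMdef
  have h11 : M.toBlocks₁₁ = Matrix.diagonal (fun _ => μ) := by
    ext i j
    simp [Matrix.toBlocks₁₁, hMdef, LinearMap.toMatrix_apply, h, Matrix.diagonal,
      Finsupp.single_apply, eq_comm]
  have h21 : M.toBlocks₂₁ = 0 := by
    ext i j
    simp [Matrix.toBlocks₂₁, hMdef, LinearMap.toMatrix_apply, h]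
  have hblocks := Matrix.fromBlocks_toBlocks M
  rw [hM, ← hblocks, h11, h21, Matrix.charpoly_fromBlocks_zero₂₁]
  have hd : (Matrix.diagonal (fun _ : ι₁ => μ)).charpoly = (X - C μ) ^ Fintype.card ι₁ := by
    rw [charpoly_diagonal_aux]
    simp [Finset.prod_const, Finset.card_univ]
  rw [hd]
  exact Dvd.intro _ rfl

theorem eig_dvd_charpoly {K V : Type*} [Field K] [AddCommGroup V] [Module K V]
    [FiniteDimensional K V] (f : Module.End K V) (μ : K) :
    (X - C μ) ^ (finrank K (f.eigenspace μ)) ∣ f.charpoly := by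
  set W := f.eigenspace μ with hW
  obtain ⟨W', hW'⟩ := Submodule.exists_isCompl W
  set bW := finBasis K W
  set bW' := finBasis K W'
  set e := Submodule.prodEquivOfIsCompl W W' hW'
  set b := (bW.prod bW').map e with hb
  have hkey : ∀ j, f (b (Sum.inl j)) = μ • b (Sum.inl j) := by
    intro j
    have h1 : b (Sum.inl j) = (bW j : V) := by
      simp [hb, Basis.prod_apply, e, Submodule.prodEquivOfIsCompl]
      erw [LinearEquiv.ofBijective_apply]
      simp
    rw [h1]
    exact Module.End.mem_eigenspace_iff.mp (bW j).2
  simpa using aux_basis_dvd b f μ hkey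

theorem charpoly_mulVecLin_aux {K : Type*} [CommRing K] [Nontrivial K] {d : ℕ}
    (A : Matrix (Fin d) (Fin d) K) : (A.mulVecLin).charpoly = A.charpoly := by
  rw [← LinearMap.charpoly_toMatrix A.mulVecLin (Pi.basisFun K (Fin d))]
  congr 1
  ext i j
  simp [LinearMap.toMatrix_apply, Matrix.mulVecLin, Matrix.mulVec, dotProduct,
    Pi.single_apply]

theorem root_charpoly_pow_eq_one {d n : ℕ} {L : Type*} [Field L] (B : Matrix (Fin d) (Fin d) L)
    (hB : B ^ n = 1) (α : L) (hroot : (B.charpoly).eval α = 0) : α ^ n = 1 := by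
  have hdet : ((Matrix.diagonal (fun _ => α)) - B).det = 0 := by
    have h1 : (B.charpoly).eval α = ((Matrix.charmatrix B).map (eval α)).det := by
      rw [Matrix.charpoly, show (eval α : L[X] → L) = ⇑(evalRingHom α) from rfl,
        ← RingHom.mapMatrix_apply, ← RingHom.map_det]
    have h2 : (Matrix.charmatrix B).map (eval α) = (Matrix.diagonal (fun _ => α)) - B := by
      ext i j
      rcases eq_or_ne i j with rfl | hij
      · simp [Matrix.charmatrix_apply_eq]
      · simp [Matrix.charmatrix_apply_ne _ _ _ hij, Matrix.diagonal_apply_ne _ hij]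
    rw [h1, h2] at hroot
    exact hroot
  obtain ⟨v, hv0, hveq⟩ := (Matrix.exists_mulVec_eq_zero_iff).mpr hdet
  have hBv : B.mulVec v = α • v := by
    rw [Matrix.sub_mulVec, sub_eq_zero] at hveq
    rw [← hveq]
    ext i
    simp [Matrix.mulVec_diagonal]
  have hpow : ∀ k : ℕ, (B ^ k).mulVec v = α ^ k • v := by
    intro k
    induction k with
    | zero => simp
    | succ k ih =>
      rw [pow_succ, ← Matrix.mulVec_mulVec, hBv, Matrix.mulVec_smul, ih, smul_smul, pow_succ,
        mul_comm]
  have h1 : α ^ n • v = v := by rw [← hpow, hB, Matrix.one_mulVec]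
  by_contra hne
  obtain ⟨i, hi⟩ := Function.ne_iff.mp hv0
  have h2 := congrFun h1 i
  simp only [Pi.smul_apply, smul_eq_mul] at h2
  have h3 : (α ^ n - 1) * v i = 0 := by linear_combination h2
  rcases mul_eq_zero.mp h3 with h | h
  · exact hne (sub_eq_zero.mp h)
  · exact hi (by simpa using h)

theorem irred_factor_dvd {d n : ℕ} (B : Matrix (Fin d) (Fin d) ℚ) (hB : B ^ n = 1)
    (f : ℚ[X]) (hfm : f.Monic) (hfi : Irreducible f) (hdvd : f ∣ B.charpoly) :
    f ∣ (X ^ n - 1 : ℚ[X]) := by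
  haveI : Fact (Irreducible f) := ⟨hfi⟩
  let φ := algebraMap ℚ (AdjoinRoot f)
  let α : AdjoinRoot f := AdjoinRoot.root f
  have hroot : ((B.map φ).charpoly).eval α = 0 := by
    obtain ⟨c, hc⟩ := hdvd
    rw [Matrix.charpoly_map, hc, Polynomial.map_mul, eval_mul]
    have h0 : (f.map φ).eval α = 0 := by
      rw [eval_map, ← aeval_def, show α = AdjoinRoot.root f from rfl]
      erw [AdjoinRoot.aeval_eq, AdjoinRoot.mk_self]
    rw [h0, zero_mul]
  have hBKn : (B.map φ) ^ n = 1 := by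
    rw [← RingHom.mapMatrix_apply, ← map_pow, hB, map_one]
  have hαn : α ^ n = 1 := root_charpoly_pow_eq_one (B.map φ) hBKn α hroot
  have hmin : minpoly ℚ α = f := by
    rw [show α = AdjoinRoot.root f from rfl]
    erw [AdjoinRoot.minpoly_root hfi.ne_zero, hfm.leadingCoeff, inv_one, map_one, mul_one]
  rw [← hmin]
  apply minpoly.dvd
  simp [hαn]

theorem cyclo_factorization (n : ℕ) (hn : 0 < n) :
    ∀ (N : ℕ) (r : ℚ[X]), r.natDegree ≤ N → r.Monic →
      (∀ f : ℚ[X], f.Monic → Irreducible f → f ∣ r → f ∣ (X ^ n - 1 : ℚ[X])) →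
      ∃ s : Multiset ℕ, (∀ m ∈ s, 0 < m) ∧ r = (s.map fun m => cyclotomic m ℚ).prod := by
  intro N
  induction N with
  | zero =>
    intro r hdeg hmonic _
    refine ⟨0, by simp, ?_⟩
    simpa using hmonic.natDegree_eq_zero.mp (Nat.le_zero.mp hdeg)
  | succ N ih =>
    intro r hdeg hmonic hfac
    rcases Nat.eq_zero_or_pos r.natDegree with h0 | hpos
    · refine ⟨0, by simp, ?_⟩
      simpa using hmonic.natDegree_eq_zero.mp h0
    · have hru : ¬IsUnit r := not_isUnit_of_natDegree_pos r hpos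
      obtain ⟨i, hirr, hidvd⟩ := WfDvdMonoid.exists_irreducible_factor hru hmonic.ne_zero
      set f := i * C i.leadingCoeff⁻¹ with hf
      have hfm : f.Monic := monic_mul_leadingCoeff_inv hirr.ne_zero
      have hassoc : Associated i f := by
        refine associated_mul_unit_right _ _ ?_
        exact isUnit_C.mpr
          (isUnit_iff_ne_zero.mpr (inv_ne_zero (leadingCoeff_ne_zero.mpr hirr.ne_zero)))
      have hfirr : Irreducible f := hassoc.irreducible hirr
      have hfdvd : f ∣ r := hassoc.dvd_iff_dvd_left.mp hidvd
      have hfX : f ∣ (X ^ n - 1 : ℚ[X]) := hfac f hfm hfirr hfdvd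
      rw [← prod_cyclotomic_eq_X_pow_sub_one hn ℚ] at hfX
      obtain ⟨m, hmmem, hmdvd⟩ := (hfirr.prime).exists_mem_finset_dvd hfX
      have hm0 : 0 < m := Nat.pos_of_mem_divisors hmmem
      have hcycirr : Irreducible (cyclotomic m ℚ) := cyclotomic.irreducible_rat hm0
      have hfeq : f = cyclotomic m ℚ :=
        eq_of_monic_of_associated hfm (cyclotomic.monic m ℚ)
          (hfirr.associated_of_dvd hcycirr hmdvd)
      obtain ⟨r', hr'⟩ := hfdvd
      have hr'm : r'.Monic := hfm.of_mul_monic_left (hr' ▸ hmonic)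
      have hdeg' : r'.natDegree ≤ N := by
        have h1 : r.natDegree = f.natDegree + r'.natDegree := by
          rw [hr', hfm.natDegree_mul hr'm]
        have h2 : 0 < f.natDegree := hfirr.natDegree_pos
        omega
      have hfac' : ∀ g : ℚ[X], g.Monic → Irreducible g → g ∣ r' → g ∣ (X ^ n - 1 : ℚ[X]) := by
        intro g hg1 hg2 hg3
        exact hfac g hg1 hg2 (hg3.trans ⟨f, by rw [hr', mul_comm]⟩)
      obtain ⟨s', hs'pos, hs'eq⟩ := ih r' hdeg' hr'm hfac'
      refine ⟨m ::ₘ s', ?_, ?_⟩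
      · intro x hx
        rcases Multiset.mem_cons.mp hx with rfl | hx
        · exact hm0
        · exact hs'pos x hx
      · rw [hr', hfeq, hs'eq]; simp

theorem rootMultiplicity_pow' {R : Type*} [CommRing R] [IsDomain R] {f : R[X]} (hf : f ≠ 0)
    (x : R) (c : ℕ) : rootMultiplicity x (f ^ c) = c * rootMultiplicity x f := by
  induction c with
  | zero => simp [rootMultiplicity_eq_zero (by simp : ¬IsRoot 1 x)]
  | succ c ih =>
    rw [pow_succ, rootMultiplicity_mul (mul_ne_zero (pow_ne_zero c hf) hf), ih]
    ring

theorem rootMultiplicity_multiset_prod {R : Type*} [CommRing R] [IsDomain R]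
    (s : Multiset R[X]) (hs : (0 : R[X]) ∉ s) (x : R) :
    rootMultiplicity x s.prod = (s.map (rootMultiplicity x)).sum := by
  induction s using Multiset.induction with
  | empty => simp [rootMultiplicity_eq_zero (by simp : ¬IsRoot 1 x)]
  | cons f s ih =>
    have hf : f ≠ 0 := by rintro rfl; exact hs (Multiset.mem_cons_self _ _)
    have hs' : (0 : R[X]) ∉ s := fun h => hs (Multiset.mem_cons_of_mem h)
    have hsprod : s.prod ≠ 0 := Multiset.prod_ne_zero hs'
    rw [Multiset.prod_cons, rootMultiplicity_mul (mul_ne_zero hf hsprod), ih hs',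
      Multiset.map_cons, Multiset.sum_cons]

theorem cyclo_rootMult_le (p : ℕ) [hp : Fact p.Prime] (ε : (ZMod p)ˣ) (m : ℕ) (hm : 0 < m) :
    rootMultiplicity (ε : ZMod p) (cyclotomic m (ZMod p)) * Nat.totient (orderOf ε)
      ≤ Nat.totient m := by
  obtain ⟨k, m', hpm', hmeq⟩ : ∃ k m', ¬ p ∣ m' ∧ p ^ k * m' = m :=
    ⟨m.factorization p, m / p ^ m.factorization p, Nat.not_dvd_ordCompl hp.out hm.ne',
      Nat.ordProj_mul_ordCompl_eq_self m p⟩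
  have hm'pos : 0 < m' := by
    rcases Nat.eq_zero_or_pos m' with rfl | h
    · omega
    · exact h
  haveI : NeZero (m' : ZMod p) :=
    ⟨fun h => hpm' ((ZMod.natCast_eq_zero_iff m' p).mp h)⟩
  have hΦ : cyclotomic m (ZMod p) = cyclotomic m' (ZMod p) ^ (p ^ k).totient := by
    rcases Nat.eq_zero_or_pos k with rfl | hkpos
    · simp [← hmeq]
    · rw [← hmeq, cyclotomic_mul_prime_pow_eq (ZMod p) hpm' hkpos,
        Nat.totient_prime_pow hp.out hkpos]
      congr 1
      have h1 : p ^ k = p ^ (k - 1) * p := by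
        rw [← pow_succ]
        congr 1
        omega
      have h2 : p ^ (k - 1) * (p - 1) = p ^ (k - 1) * p - p ^ (k - 1) * 1 := Nat.mul_sub ..
      have h3 : 0 < p := hp.out.pos
      omega
  have htot : m.totient = (p ^ k).totient * m'.totient := by
    rw [← hmeq, Nat.totient_mul]
    exact Nat.Coprime.pow_left _ ((Nat.Prime.coprime_iff_not_dvd hp.out).mpr hpm')
  rw [hΦ, rootMultiplicity_pow' (cyclotomic_ne_zero m' (ZMod p)), htot]
  set r' := rootMultiplicity (ε : ZMod p) (cyclotomic m' (ZMod p)) with hr'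
  rcases Nat.eq_zero_or_pos r' with h0 | hpos
  · simp [h0]
  · have hisroot : IsRoot (cyclotomic m' (ZMod p)) (ε : ZMod p) :=
      (rootMultiplicity_pos (cyclotomic_ne_zero m' (ZMod p))).mp hpos
    have hprim : IsPrimitiveRoot (ε : ZMod p) m' := isRoot_cyclotomic_iff.mp hisroot
    have hord : m' = orderOf ε := by
      rw [← orderOf_units]
      exact hprim.eq_orderOf
    have hr'le : r' ≤ 1 := by
      by_contra hgt
      have h2 : (X - C (ε : ZMod p)) ^ 2 ∣ X ^ m' - 1 := by
        have h21 : (X - C (ε : ZMod p)) ^ 2 ∣ (X - C (ε : ZMod p)) ^ r' :=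
          pow_dvd_pow _ (by omega)
        exact h21.trans ((pow_rootMultiplicity_dvd _ _).trans
          (cyclotomic.dvd_X_pow_sub_one m' (ZMod p)))
      have hsq : Squarefree ((X : (ZMod p)[X]) ^ m' - 1) :=
        (separable_X_pow_sub_C 1 (NeZero.natCast_ne m' (ZMod p)) one_ne_zero).squarefree
      obtain ⟨c, hc⟩ := h2
      exact Polynomial.not_isUnit_X_sub_C _ (hsq (X - C (ε : ZMod p)) ⟨c, by rw [hc]; ring⟩)
    calc (p ^ k).totient * r' * (orderOf ε).totient
        ≤ (p ^ k).totient * 1 * (orderOf ε).totient :=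
          Nat.mul_le_mul_right _ (Nat.mul_le_mul_left _ hr'le)
      _ = (p ^ k).totient * m'.totient := by rw [hord]; ring

/-- Let `ε ∈ (ℤ/p)ˣ` have order `t` and `g ∈ GL_d(ℤ)` have finite order.  The dimension of
the `ε`-eigenspace of the reduction of `g` mod `p`, acting on `(ℤ/p)^d`, is at most
`d / φ(t)`. -/
theorem eigenspace_dim_le (p t d : ℕ) (hp : p.Prime) (ε : (ZMod p)ˣ) (ht : orderOf ε = t)
    (g : GL (Fin d) ℤ) (hg : IsOfFinOrder g) :
    Module.finrank (ZMod p)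
      (Module.End.eigenspace
        (Matrix.mulVecLin ((g : Matrix (Fin d) (Fin d) ℤ).map (Int.cast : ℤ → ZMod p)))
        (ε : ZMod p)) ≤ d / Nat.totient t := by
  haveI : Fact p.Prime := ⟨hp⟩
  set A := (g : Matrix (Fin d) (Fin d) ℤ) with hA
  set Abar := A.map (Int.cast : ℤ → ZMod p) with hAbar
  set n := orderOf g with hn'
  have hn : 0 < n := hg.orderOf_pos
  have hgn : g ^ n = 1 := pow_orderOf_eq_one g
  have hAn : A ^ n = 1 := by
    have h := congrArg (Units.val) hgn
    rw [Units.val_pow_eq_pow_val] at h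
    simpa [hA] using h
  set B := A.map (Int.cast : ℤ → ℚ) with hB
  have hBn : B ^ n = 1 := by
    rw [show B = (Int.castRingHom ℚ).mapMatrix A from rfl, ← map_pow, hAn, map_one]
  have hBchar : B.charpoly = A.charpoly.map (Int.castRingHom ℚ) :=
    Matrix.charpoly_map A (Int.castRingHom ℚ)
  obtain ⟨s, hspos, hseq⟩ := cyclo_factorization n hn (B.charpoly.natDegree) B.charpoly le_rfl
    (Matrix.charpoly_monic B) (fun f hf1 hf2 hf3 => irred_factor_dvd B hBn f hf1 hf2 hf3)
  have hZ : A.charpoly = (s.map fun m => cyclotomic m ℤ).prod := by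
    apply Polynomial.map_injective (Int.castRingHom ℚ) Int.cast_injective
    rw [← hBchar, hseq, Polynomial.map_multiset_prod, Multiset.map_map]
    congr 1
    apply Multiset.map_congr rfl
    intro m _
    exact (map_cyclotomic_int m ℚ).symm
  have hPbar : Abar.charpoly = (s.map fun m => cyclotomic m (ZMod p)).prod := by
    have h1 : Abar.charpoly = A.charpoly.map (Int.castRingHom (ZMod p)) :=
      Matrix.charpoly_map A (Int.castRingHom (ZMod p))
    rw [h1, hZ, Polynomial.map_multiset_prod, Multiset.map_map]
    congr 1
    apply Multiset.map_congr rfl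
    intro m _
    exact map_cyclotomic_int m (ZMod p)
  set k := Module.finrank (ZMod p)
    (Module.End.eigenspace (Matrix.mulVecLin Abar) (ε : ZMod p)) with hk'
  have hdvd : (X - C (ε : ZMod p)) ^ k ∣ Abar.charpoly := by
    rw [← charpoly_mulVecLin_aux]
    exact eig_dvd_charpoly _ _
  have hcne : Abar.charpoly ≠ 0 := (Matrix.charpoly_monic Abar).ne_zero
  have hkle : k ≤ rootMultiplicity (ε : ZMod p) Abar.charpoly :=
    (le_rootMultiplicity_iff hcne).mpr hdvd
  have hmult : rootMultiplicity (ε : ZMod p) Abar.charpoly =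
      (s.map fun m => rootMultiplicity (ε : ZMod p) (cyclotomic m (ZMod p))).sum := by
    rw [hPbar, rootMultiplicity_multiset_prod _ ?_ _, Multiset.map_map]
    · rfl
    · intro h0
      obtain ⟨m, _, hm0⟩ := Multiset.mem_map.mp h0
      exact cyclotomic_ne_zero m (ZMod p) hm0
  have hdeg : (s.map fun m => Nat.totient m).sum = d := by
    have h1 : Abar.charpoly.natDegree = d := by
      rw [Matrix.charpoly_natDegree_eq_dim, Fintype.card_fin]
    rw [hPbar, natDegree_multiset_prod_of_monic] at h1
    · rw [Multiset.map_map] at h1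
      rw [← h1]
      congr 1
      apply Multiset.map_congr rfl
      intro m _
      exact (natDegree_cyclotomic m (ZMod p)).symm
    · intro f hf
      obtain ⟨m, _, hm0⟩ := Multiset.mem_map.mp hf
      exact hm0 ▸ cyclotomic.monic m (ZMod p)
  have htpos : 0 < t.totient := Nat.totient_pos.mpr (ht ▸ orderOf_pos ε)
  rw [Nat.le_div_iff_mul_le htpos]
  calc k * t.totient
      ≤ (s.map fun m => rootMultiplicity (ε : ZMod p) (cyclotomic m (ZMod p))).sum * t.totient :=
        Nat.mul_le_mul_right _ (hmult ▸ hkle)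
    _ = (s.map fun m =>
          rootMultiplicity (ε : ZMod p) (cyclotomic m (ZMod p)) * t.totient).sum := by
        rw [← Multiset.sum_map_mul_right]
    _ ≤ (s.map fun m => Nat.totient m).sum := by
        apply Multiset.sum_map_le_sum_map
        intro m hm
        have := cyclo_rootMult_le p ε m (hspos m hm)
        rwa [ht] at this
    _ = d := hdeg
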